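/- Fix a real number q > 1 and an integer r ≥ 1. Define b : ℤ → ℝ by b(m) = Σ q^{2j_1 + 4j_2 + ... + 2r·j_r}, the sum over all tuples (j_1,...,j_r, k) ∈ ℤ_{≥0}^{r+1} with k + 2(j_1 + ... + j_r) = m (so b(m) = 0 for m < 0). Let S denote the shift operator (Sf)(m) = f(m−2). Then (∏_{j=1}^{r} (1 − q^{2j} S)) b = 1_{ℤ_{≥0}}, i.e. the resulting function equals 1 for m ≥ 0 and 0 for m < 0. -/

import Mathlib

/-- The basic function: `b m = Σ q^(2j₁+4j₂+⋯+2r·j_r)`, summed over tuples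
`(j₁,…,j_r,k) ∈ ℤ_{≥0}^{r+1}` with `k + 2(j₁+⋯+j_r) = m`. -/
noncomputable def basicFn (q : ℝ) (r : ℕ) (m : ℤ) : ℝ :=
  ∑' p : (Fin r → ℕ) × ℕ,
    if (p.2 : ℤ) + 2 * ∑ i, (p.1 i : ℤ) = m then
      q ^ (2 * ∑ i : Fin r, (i.1 + 1) * p.1 i) else 0

/-- Apply the operator `∏_{j=1}^{r} (1 - q^{2j} S)` to `f`, where `(Sf)(m) = f(m-2)`. -/
noncomputable def applyOps (q : ℝ) (r : ℕ) (f : ℤ → ℝ) : ℤ → ℝ :=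
  (List.range r).foldr (fun j g => fun m => g m - q ^ (2 * (j + 1)) * g (m - 2)) f

/-- Indicator-type functions on the fibers are summable (finite support). -/
lemma indicator_summable (n : ℕ) (m : ℤ) (w : (Fin n → ℕ) × ℕ → ℝ) :
    Summable (fun p : (Fin n → ℕ) × ℕ =>
      if (p.2 : ℤ) + 2 * ∑ i, (p.1 i : ℤ) = m then w p else 0) := by
  apply summable_of_ne_finset_zero
    (s := (Fintype.piFinset fun _ : Fin n => Finset.range (m.toNat + 1)) ×ˢ
      Finset.range (m.toNat + 1))
  intro p hp
  rw [if_neg]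
  intro h
  apply hp
  have hnn : (0 : ℤ) ≤ ∑ i, (p.1 i : ℤ) :=
    Finset.sum_nonneg fun i _ => Int.natCast_nonneg _
  have hk : (p.2 : ℤ) ≤ m := by omega
  have hJ : ∀ i : Fin n, 2 * (p.1 i : ℤ) ≤ m := by
    intro i
    have hi : (p.1 i : ℤ) ≤ ∑ i, (p.1 i : ℤ) :=
      Finset.single_le_sum (f := fun i => (p.1 i : ℤ))
        (fun i _ => Int.natCast_nonneg _) (Finset.mem_univ i)
    omega
  simp only [Finset.mem_product, Fintype.mem_piFinset, Finset.mem_range]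
  constructor
  · intro i; have := hJ i; omega
  · omega

lemma basicFn_of_neg (q : ℝ) (n : ℕ) (m : ℤ) (hm : m < 0) : basicFn q n m = 0 := by
  unfold basicFn
  have : ∀ p : (Fin n → ℕ) × ℕ,
      (if (p.2 : ℤ) + 2 * ∑ i, (p.1 i : ℤ) = m then
        q ^ (2 * ∑ i : Fin n, (i.1 + 1) * p.1 i) else 0) = 0 := by
    intro p
    rw [if_neg]
    have hnn : (0 : ℤ) ≤ ∑ i, (p.1 i : ℤ) :=
      Finset.sum_nonneg fun i _ => Int.natCast_nonneg _
    intro h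
    omega
  simp only [this, tsum_zero]

/-- The equivalence splitting off the last coordinate. -/
def snocEquiv (s : ℕ) : ℕ × ((Fin s → ℕ) × ℕ) ≃ (Fin (s + 1) → ℕ) × ℕ where
  toFun x := (Fin.snoc x.2.1 x.1, x.2.2)
  invFun y := (y.1 (Fin.last s), (fun i => y.1 i.castSucc, y.2))
  left_inv := by
    rintro ⟨j, J, k⟩
    simp
  right_inv := by
    rintro ⟨J, k⟩
    refine Prod.ext ?_ rfl
    exact Fin.snoc_init_self J

lemma basicFn_eq_tsum (q : ℝ) (s : ℕ) (m : ℤ) :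
    basicFn q (s + 1) m = ∑' j : ℕ, q ^ (2 * (s + 1) * j) * basicFn q s (m - 2 * j) := by
  set F : (Fin (s + 1) → ℕ) × ℕ → ℝ := fun p =>
    if (p.2 : ℤ) + 2 * ∑ i, (p.1 i : ℤ) = m then
      q ^ (2 * ∑ i : Fin (s + 1), (i.1 + 1) * p.1 i) else 0 with hF
  have hsum : Summable F := indicator_summable _ _ _
  have hsum' : Summable (F ∘ snocEquiv s) := ((snocEquiv s).summable_iff).mpr hsum
  have key : ∀ (j : ℕ) (J : Fin s → ℕ) (k : ℕ), F (snocEquiv s (j, (J, k))) =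
      q ^ (2 * (s + 1) * j) *
        (if (k : ℤ) + 2 * ∑ i, (J i : ℤ) = m - 2 * j then
          q ^ (2 * ∑ i : Fin s, (i.1 + 1) * J i) else 0) := by
    intro j J k
    simp only [hF, snocEquiv, Equiv.coe_fn_mk, Fin.sum_univ_castSucc, Fin.snoc_castSucc,
      Fin.snoc_last, Fin.coe_castSucc, Fin.val_last]
    have hc : ((k : ℤ) + 2 * (∑ i, (J i : ℤ) + (j : ℤ)) = m) ↔
        ((k : ℤ) + 2 * ∑ i, (J i : ℤ) = m - 2 * j) := by omega
    have he : 2 * (∑ i : Fin s, (i.1 + 1) * J i + (s + 1) * j) =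
        2 * (s + 1) * j + 2 * ∑ i : Fin s, (i.1 + 1) * J i := by ring
    rw [mul_ite, mul_zero, ← pow_add, ← he]
    by_cases h : (k : ℤ) + 2 * ∑ i, (J i : ℤ) = m - 2 * j
    · rw [if_pos (hc.mpr h), if_pos h]
    · rw [if_neg (fun hh => h (hc.mp hh)), if_neg h]
  calc basicFn q (s + 1) m = ∑' p, F p := rfl
    _ = ∑' x : ℕ × ((Fin s → ℕ) × ℕ), F (snocEquiv s x) := ((snocEquiv s).tsum_eq F).symm
    _ = ∑' j, ∑' c : (Fin s → ℕ) × ℕ, F (snocEquiv s (j, c)) :=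
        Summable.tsum_prod' hsum' fun j => hsum'.prod_factor j
    _ = ∑' j : ℕ, q ^ (2 * (s + 1) * j) * basicFn q s (m - 2 * j) := by
        refine tsum_congr fun j => ?_
        have : (fun c : (Fin s → ℕ) × ℕ => F (snocEquiv s (j, c))) =
            fun c => q ^ (2 * (s + 1) * j) *
              (if (c.2 : ℤ) + 2 * ∑ i, (c.1 i : ℤ) = m - 2 * j then
                q ^ (2 * ∑ i : Fin s, (i.1 + 1) * c.1 i) else 0) := by
          funext c
          exact key j c.1 c.2
        rw [this, tsum_mul_left]
        rfl

lemma summable_aux (q : ℝ) (s : ℕ) (m : ℤ) :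
    Summable (fun j : ℕ => q ^ (2 * (s + 1) * j) * basicFn q s (m - 2 * j)) := by
  apply summable_of_ne_finset_zero (s := Finset.range (m.toNat + 1))
  intro j hj
  rw [Finset.mem_range] at hj
  rw [basicFn_of_neg, mul_zero]
  omega

lemma basicFn_rec (q : ℝ) (s : ℕ) (m : ℤ) :
    basicFn q (s + 1) m = basicFn q s m + q ^ (2 * (s + 1)) * basicFn q (s + 1) (m - 2) := by
  rw [basicFn_eq_tsum, Summable.tsum_eq_zero_add (summable_aux q s m)]
  have h0 : q ^ (2 * (s + 1) * 0) * basicFn q s (m - 2 * (0 : ℕ)) = basicFn q s m := by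
    norm_num
  rw [h0]
  congr 1
  rw [basicFn_eq_tsum q s (m - 2), ← tsum_mul_left]
  refine tsum_congr fun j => ?_
  have h1 : (m - 2 * ((j : ℤ) + 1)) = m - 2 - 2 * j := by ring
  have h2 : 2 * (s + 1) * (j + 1) = 2 * (s + 1) + 2 * (s + 1) * j := by ring
  push_cast
  rw [h1, h2, pow_add, mul_assoc]

def zeroEquiv : ℕ ≃ (Fin 0 → ℕ) × ℕ where
  toFun k := (fun i => i.elim0, k)
  invFun y := y.2
  left_inv k := rfl
  right_inv := by
    rintro ⟨J, k⟩
    refine Prod.ext ?_ rfl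
    funext i
    exact i.elim0

lemma basicFn_zero (q : ℝ) (m : ℤ) :
    basicFn q 0 m = if 0 ≤ m then (1 : ℝ) else 0 := by
  unfold basicFn
  rw [← zeroEquiv.tsum_eq]
  simp only [zeroEquiv, Equiv.coe_fn_mk, Finset.univ_eq_empty, Finset.sum_empty, mul_zero, add_zero,
    pow_zero]
  by_cases hm : 0 ≤ m
  · rw [if_pos hm]
    have : (fun k : ℕ => if (k : ℤ) = m then (1 : ℝ) else 0) =
        fun k : ℕ => if k = m.toNat then (1 : ℝ) else 0 := by
      funext k
      congr 1
      simp only [eq_iff_iff]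
      omega
    rw [this]
    exact tsum_ite_eq m.toNat (fun _ => (1 : ℝ))
  · rw [if_neg hm]
    have : (fun k : ℕ => if (k : ℤ) = m then (1 : ℝ) else 0) = fun _ => (0 : ℝ) := by
      funext k
      rw [if_neg]
      omega
    rw [this, tsum_zero]

lemma applyOps_succ (q : ℝ) (s : ℕ) (f : ℤ → ℝ) :
    applyOps q (s + 1) f =
      applyOps q s (fun m => f m - q ^ (2 * (s + 1)) * f (m - 2)) := by
  unfold applyOps
  rw [List.range_succ, List.foldr_append]
  rfl

/-- For `q > 1` and `r ≥ 1`,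
`(∏_{j=1}^{r} (1 - q^{2j} S)) b = 1_{ℤ≥0}`. -/
theorem stmt_12 (q : ℝ) (hq : 1 < q) (r : ℕ) (hr : 1 ≤ r) :
    applyOps q r (basicFn q r) = fun m : ℤ => if 0 ≤ m then (1 : ℝ) else 0 := by
  suffices h : ∀ n : ℕ, applyOps q n (basicFn q n) = fun m : ℤ => if 0 ≤ m then (1 : ℝ) else 0
    from h r
  intro n
  induction n with
  | zero =>
    funext m
    simp only [applyOps, List.range_zero, List.foldr_nil]
    exact basicFn_zero q m
  | succ s ih =>
    rw [applyOps_succ]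
    have h : (fun m => basicFn q (s + 1) m - q ^ (2 * (s + 1)) * basicFn q (s + 1) (m - 2)) =
        basicFn q s := by
      funext m
      rw [basicFn_rec]
      ring
    rw [h, ih]
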